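/- Let λ > 0, let p ∈ [4,∞), and let (a_m)_{m ∈ S_λ} be complex numbers, where S_λ := {m ∈ ℤ² : |m|² = λ}. Set u(x) := Σ_{m ∈ S_λ} a_m e^{2πi m·x}. Then ∫_{[0,1]²} |u(x)|^p dx ≤ 3·|S_λ|^{(p−4)/2}·( Σ_{m ∈ S_λ} |a_m|² )^{p/2}, where |S_λ| denotes the cardinality of S_λ. -/

import Mathlib

open MeasureTheory Real

noncomputable section

namespace LpCircleAux

def E (m : ℤ × ℤ) (x : ℝ × ℝ) : ℂ :=
  Complex.exp (2 * (Real.pi : ℂ) * Complex.I * ((m.1 : ℂ) * (x.1 : ℂ) + (m.2 : ℂ) * (x.2 : ℂ)))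

lemma contE (m : ℤ × ℤ) : Continuous (E m) := by
  unfold E; fun_prop

lemma normE (m : ℤ × ℤ) (x : ℝ × ℝ) : ‖E m x‖ = 1 := by
  have h : (2 * (Real.pi : ℂ) * Complex.I * ((m.1 : ℂ) * (x.1 : ℂ) + (m.2 : ℂ) * (x.2 : ℂ)))
      = ((2 * Real.pi * (m.1 * x.1 + m.2 * x.2) : ℝ) : ℂ) * Complex.I := by push_cast; ring
  rw [E, h, Complex.norm_exp_ofReal_mul_I]

lemma mulE (m n : ℤ × ℤ) (x : ℝ × ℝ) : E m x * E n x = E (m + n) x := by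
  unfold E; rw [← Complex.exp_add]; congr 1
  simp only [Prod.fst_add, Prod.snd_add]
  push_cast; ring

lemma conjE (m : ℤ × ℤ) (x : ℝ × ℝ) : (starRingEnd ℂ) (E m x) = E (-m) x := by
  unfold E
  rw [← Complex.exp_conj]
  congr 1
  simp only [map_mul, map_add, Complex.conj_I, map_ofNat, Complex.conj_ofReal,
    map_intCast, Prod.fst_neg, Prod.snd_neg]
  push_cast
  ring

lemma E_zero (x : ℝ × ℝ) : E 0 x = 1 := by simp [E]

def Q : Set (ℝ × ℝ) := Set.Icc (0 : ℝ) 1 ×ˢ Set.Icc (0 : ℝ) 1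

lemma measQ : MeasurableSet Q := measurableSet_Icc.prod measurableSet_Icc

lemma compQ : IsCompact Q := IsCompact.prod isCompact_Icc isCompact_Icc

lemma intQ {f : ℝ × ℝ → ℂ} (hf : Continuous f) : IntegrableOn f Q :=
  hf.continuousOn.integrableOn_compact compQ

lemma int1d (k : ℤ) :
    ∫ t in Set.Icc (0 : ℝ) 1, Complex.exp (2 * (Real.pi : ℂ) * Complex.I * k * t)
      = if k = 0 then 1 else 0 := by
  rw [integral_Icc_eq_integral_Ioc, ← intervalIntegral.integral_of_le (zero_le_one)]
  by_cases hk : k = 0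
  · simp [hk]
  · have hc : (2 * (Real.pi : ℂ) * Complex.I * k) ≠ 0 := by
      simp [Real.pi_ne_zero, Complex.I_ne_zero, hk]
    rw [if_neg hk]
    rw [integral_exp_mul_complex hc]
    have h1 : (2 * (Real.pi : ℂ) * Complex.I * k) * (1 : ℝ) = (k : ℂ) * (2 * Real.pi * Complex.I) := by
      push_cast; ring
    have h0 : (2 * (Real.pi : ℂ) * Complex.I * k) * (0 : ℝ) = 0 := by push_cast; ring
    rw [h1, h0, Complex.exp_int_mul_two_pi_mul_I, Complex.exp_zero, sub_self, zero_div]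

lemma orthE (m : ℤ × ℤ) : ∫ x in Q, E m x = if m = 0 then 1 else 0 := by
  have hsplit : ∀ x : ℝ × ℝ, E m x =
      Complex.exp (2 * (Real.pi : ℂ) * Complex.I * m.1 * x.1) *
      Complex.exp (2 * (Real.pi : ℂ) * Complex.I * m.2 * x.2) := by
    intro x; rw [E, ← Complex.exp_add]; congr 1; ring
  have key : (∫ x in (Set.Icc (0:ℝ) 1 ×ˢ Set.Icc (0:ℝ) 1),
        Complex.exp (2 * (Real.pi : ℂ) * Complex.I * m.1 * x.1) *
          Complex.exp (2 * (Real.pi : ℂ) * Complex.I * m.2 * x.2))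
      = (∫ t in Set.Icc (0:ℝ) 1, Complex.exp (2 * (Real.pi : ℂ) * Complex.I * m.1 * t)) *
        (∫ t in Set.Icc (0:ℝ) 1, Complex.exp (2 * (Real.pi : ℂ) * Complex.I * m.2 * t)) := by
    rw [MeasureTheory.Measure.volume_eq_prod]
    exact setIntegral_prod_mul (fun t : ℝ => Complex.exp (2 * (Real.pi : ℂ) * Complex.I * m.1 * t))
      (fun t : ℝ => Complex.exp (2 * (Real.pi : ℂ) * Complex.I * m.2 * t)) _ _
  rw [Q]
  simp only [hsplit]
  rw [key, int1d m.1, int1d m.2]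
  by_cases h1 : m.1 = 0 <;> by_cases h2 : m.2 = 0 <;>
    simp [h1, h2, Prod.ext_iff]

end LpCircleAux
namespace LpCircleAux

lemma quadroots {A B C t u v : ℝ} (hA : A ≠ 0)
    (ht : A * t ^ 2 + B * t + C = 0) (hu : A * u ^ 2 + B * u + C = 0)
    (hv : A * v ^ 2 + B * v + C = 0) (htu : t ≠ u) (htv : t ≠ v) : u = v := by
  have h1 : (t - u) * (A * (t + u) + B) = 0 := by linear_combination ht - hu
  have h2 : (t - v) * (A * (t + v) + B) = 0 := by linear_combination ht - hv
  have e1 : A * (t + u) + B = 0 :=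
    (mul_eq_zero.mp h1).resolve_left (sub_ne_zero.mpr htu)
  have e2 : A * (t + v) + B = 0 :=
    (mul_eq_zero.mp h2).resolve_left (sub_ne_zero.mpr htv)
  have : A * (u - v) = 0 := by linarith
  have := (mul_eq_zero.mp this).resolve_left hA
  linarith

lemma three_pts {s1 s2 lam x1 x2 y1 y2 z1 z2 : ℝ} (hs : s1 ≠ 0 ∨ s2 ≠ 0)
    (hx : x1 ^ 2 + x2 ^ 2 = lam) (hx' : (s1 - x1) ^ 2 + (s2 - x2) ^ 2 = lam)
    (hy : y1 ^ 2 + y2 ^ 2 = lam) (hy' : (s1 - y1) ^ 2 + (s2 - y2) ^ 2 = lam)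
    (hz : z1 ^ 2 + z2 ^ 2 = lam) (hz' : (s1 - z1) ^ 2 + (s2 - z2) ^ 2 = lam)
    (hxy : ¬(x1 = y1 ∧ x2 = y2)) (hxz : ¬(x1 = z1 ∧ x2 = z2)) :
    y1 = z1 ∧ y2 = z2 := by
  have lx : 2 * s1 * x1 + 2 * s2 * x2 = s1 ^ 2 + s2 ^ 2 := by linear_combination hx - hx'
  have ly : 2 * s1 * y1 + 2 * s2 * y2 = s1 ^ 2 + s2 ^ 2 := by linear_combination hy - hy'
  have lz : 2 * s1 * z1 + 2 * s2 * z2 = s1 ^ 2 + s2 ^ 2 := by linear_combination hz - hz'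
  have hA : (4 : ℝ) * (s1 ^ 2 + s2 ^ 2) ≠ 0 := by
    rcases hs with h | h <;> positivity
  rcases hs with h1 | h2
  · -- s1 ≠ 0 : second coordinates are roots of a quadratic
    set N := s1 ^ 2 + s2 ^ 2 with hN
    have qx : 4 * (s1 ^ 2 + s2 ^ 2) * x2 ^ 2 + (-(4 * N * s2)) * x2 + (N ^ 2 - 4 * s1 ^ 2 * lam) = 0 := by
      have h2s : 2 * s1 * x1 = N - 2 * s2 * x2 := by rw [hN]; linarith
      linear_combination (-(2*s1*x1 + N - 2*s2*x2)) * h2s + 4*s1^2 * hx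
    have qy : 4 * (s1 ^ 2 + s2 ^ 2) * y2 ^ 2 + (-(4 * N * s2)) * y2 + (N ^ 2 - 4 * s1 ^ 2 * lam) = 0 := by
      have h2s : 2 * s1 * y1 = N - 2 * s2 * y2 := by rw [hN]; linarith
      linear_combination (-(2*s1*y1 + N - 2*s2*y2)) * h2s + 4*s1^2 * hy
    have qz : 4 * (s1 ^ 2 + s2 ^ 2) * z2 ^ 2 + (-(4 * N * s2)) * z2 + (N ^ 2 - 4 * s1 ^ 2 * lam) = 0 := by
      have h2s : 2 * s1 * z1 = N - 2 * s2 * z2 := by rw [hN]; linarith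
      linear_combination (-(2*s1*z1 + N - 2*s2*z2)) * h2s + 4*s1^2 * hz
    have det : ∀ a1 a2 b1 b2 : ℝ,
        2 * s1 * a1 + 2 * s2 * a2 = N → 2 * s1 * b1 + 2 * s2 * b2 = N → a2 = b2 → a1 = b1 := by
      intro a1 a2 b1 b2 ha hb he
      have : 2 * s1 * a1 = 2 * s1 * b1 := by rw [he] at ha; linarith
      have h2 : (2 * s1) ≠ 0 := by simpa using h1
      exact mul_left_cancel₀ h2 this
    have hxy2 : x2 ≠ y2 := fun he => hxy ⟨det _ _ _ _ lx ly he, he⟩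
    have hxz2 : x2 ≠ z2 := fun he => hxz ⟨det _ _ _ _ lx lz he, he⟩
    have h22 : y2 = z2 := quadroots hA qx qy qz hxy2 hxz2
    exact ⟨det _ _ _ _ ly lz h22, h22⟩
  · -- s2 ≠ 0 : first coordinates are roots of a quadratic
    set N := s1 ^ 2 + s2 ^ 2 with hN
    have qx : 4 * (s1 ^ 2 + s2 ^ 2) * x1 ^ 2 + (-(4 * N * s1)) * x1 + (N ^ 2 - 4 * s2 ^ 2 * lam) = 0 := by
      have h2s : 2 * s2 * x2 = N - 2 * s1 * x1 := by rw [hN]; linarith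
      linear_combination (-(2*s2*x2 + N - 2*s1*x1)) * h2s + 4*s2^2 * hx
    have qy : 4 * (s1 ^ 2 + s2 ^ 2) * y1 ^ 2 + (-(4 * N * s1)) * y1 + (N ^ 2 - 4 * s2 ^ 2 * lam) = 0 := by
      have h2s : 2 * s2 * y2 = N - 2 * s1 * y1 := by rw [hN]; linarith
      linear_combination (-(2*s2*y2 + N - 2*s1*y1)) * h2s + 4*s2^2 * hy
    have qz : 4 * (s1 ^ 2 + s2 ^ 2) * z1 ^ 2 + (-(4 * N * s1)) * z1 + (N ^ 2 - 4 * s2 ^ 2 * lam) = 0 := by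
      have h2s : 2 * s2 * z2 = N - 2 * s1 * z1 := by rw [hN]; linarith
      linear_combination (-(2*s2*z2 + N - 2*s1*z1)) * h2s + 4*s2^2 * hz
    have det : ∀ a1 a2 b1 b2 : ℝ,
        2 * s1 * a1 + 2 * s2 * a2 = N → 2 * s1 * b1 + 2 * s2 * b2 = N → a1 = b1 → a2 = b2 := by
      intro a1 a2 b1 b2 ha hb he
      have : 2 * s2 * a2 = 2 * s2 * b2 := by rw [he] at ha; linarith
      have h2' : (2 * s2) ≠ 0 := by simpa using h2
      exact mul_left_cancel₀ h2' this
    have hxy1 : x1 ≠ y1 := fun he => hxy ⟨he, det _ _ _ _ lx ly he⟩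
    have hxz1 : x1 ≠ z1 := fun he => hxz ⟨he, det _ _ _ _ lx lz he⟩
    have h11 : y1 = z1 := quadroots hA qx qy qz hxy1 hxz1
    exact ⟨h11, det _ _ _ _ ly lz h11⟩

lemma card_fiber {lam : ℝ} {S : Finset (ℤ × ℤ)}
    (hS : ∀ m : ℤ × ℤ, m ∈ S ↔ ((m.1 : ℝ) ^ 2 + (m.2 : ℝ) ^ 2 = lam))
    {s : ℤ × ℤ} (hs : s ≠ 0) :
    (((S ×ˢ S).filter (fun p => p.1 + p.2 = s)).card) ≤ 2 := by
  by_contra hlt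
  push_neg at hlt
  obtain ⟨p, hp, q, hq, r, hr, hpq, hpr, hqr⟩ := Finset.two_lt_card.mp hlt
  simp only [Finset.mem_filter, Finset.mem_product] at hp hq hr
  have key : ∀ w : (ℤ × ℤ) × (ℤ × ℤ), w.1 ∈ S ∧ w.2 ∈ S → w.1 + w.2 = s →
      ((w.1.1 : ℝ) ^ 2 + (w.1.2 : ℝ) ^ 2 = lam) ∧
      (((s.1 : ℝ) - w.1.1) ^ 2 + ((s.2 : ℝ) - w.1.2) ^ 2 = lam) ∧ w.2 = s - w.1 := by
    intro w hw hsum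
    have h2 : w.2 = s - w.1 := eq_sub_of_add_eq' hsum
    refine ⟨(hS w.1).mp hw.1, ?_, h2⟩
    have := (hS w.2).mp hw.2
    rw [h2] at this
    have e1 : ((s - w.1).1 : ℝ) = (s.1 : ℝ) - w.1.1 := by
      rw [Prod.fst_sub, Int.cast_sub]
    have e2 : ((s - w.1).2 : ℝ) = (s.2 : ℝ) - w.1.2 := by
      rw [Prod.snd_sub, Int.cast_sub]
    rwa [e1, e2] at this
  obtain ⟨hpc, hpc', hp2⟩ := key p hp.1 hp.2
  obtain ⟨hqc, hqc', hq2⟩ := key q hq.1 hq.2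
  obtain ⟨hrc, hrc', hr2⟩ := key r hr.1 hr.2
  have hscast : (s.1 : ℝ) ≠ 0 ∨ (s.2 : ℝ) ≠ 0 := by
    by_contra h
    push_neg at h
    exact hs (Prod.ext (by exact_mod_cast h.1) (by exact_mod_cast h.2))
  have neq : ∀ w w' : (ℤ × ℤ) × (ℤ × ℤ), w.2 = s - w.1 → w'.2 = s - w'.1 → w ≠ w' →
      ¬((w.1.1 : ℝ) = w'.1.1 ∧ (w.1.2 : ℝ) = w'.1.2) := by
    intro w w' h1 h1' hne h
    apply hne
    have e1 : w.1.1 = w'.1.1 := by exact_mod_cast h.1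
    have e2 : w.1.2 = w'.1.2 := by exact_mod_cast h.2
    have : w.1 = w'.1 := Prod.ext e1 e2
    exact Prod.ext this (by rw [h1, h1', this])
  have := three_pts hscast hpc hpc' hqc hqc' hrc hrc'
    (neq p q hp2 hq2 hpq) (neq p r hp2 hr2 hpr)
  exact neq q r hq2 hr2 hqr this

end LpCircleAux
namespace LpCircleAux

lemma l4 (S : Finset (ℤ × ℤ)) (a : ℤ × ℤ → ℂ)
    (hcard : ∀ s : ℤ × ℤ, s ≠ 0 → ((S ×ˢ S).filter (fun p => p.1 + p.2 = s)).card ≤ 2) :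
    (∫ x in Q, ‖∑ m ∈ S, a m * E m x‖ ^ 4) ≤ 3 * (∑ m ∈ S, ‖a m‖ ^ 2) ^ 2 := by
  classical
  set u : ℝ × ℝ → ℂ := fun x => ∑ m ∈ S, a m * E m x with hu
  set P : Finset ((ℤ × ℤ) × (ℤ × ℤ)) := S ×ˢ S with hP
  set g : (ℤ × ℤ) × (ℤ × ℤ) → ℂ := fun p => a p.1 * a p.2 with hg
  set T : Finset (ℤ × ℤ) := P.image (fun p => p.1 + p.2) with hT
  set b : ℤ × ℤ → ℂ :=
    fun s => ∑ p ∈ Finset.filter (fun p => p.1 + p.2 = s) P, g p with hb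
  set v : ℝ × ℝ → ℂ := fun x => ∑ s ∈ T, b s * E s x with hv
  have maps_to : ∀ p ∈ P, p.1 + p.2 ∈ T := fun p hp => Finset.mem_image_of_mem _ hp
  -- Step A : u x * u x = v x
  have stepA : ∀ x, u x * u x = v x := by
    intro x
    rw [hu, hv, Finset.sum_mul_sum]
    have e1 : ∑ m ∈ S, ∑ n ∈ S, (a m * E m x) * (a n * E n x)
        = ∑ p ∈ P, g p * E (p.1 + p.2) x := by
      rw [hP, Finset.sum_product]
      refine Finset.sum_congr rfl fun m _ => Finset.sum_congr rfl fun n _ => ?_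
      simp only [hg, ← mulE]; ring
    rw [e1, ← Finset.sum_fiberwise_of_maps_to maps_to (fun p => g p * E (p.1 + p.2) x)]
    refine Finset.sum_congr rfl fun s hs => ?_
    have e2 : ∀ p ∈ Finset.filter (fun p => p.1 + p.2 = s) P,
        g p * E (p.1 + p.2) x = g p * E s x := by
      intro p hp
      rw [(Finset.mem_filter.mp hp).2]
    rw [Finset.sum_congr rfl e2]
    simp only [hb]
    rw [Finset.sum_mul]
  have contv : Continuous v := by
    rw [hv]; exact continuous_finset_sum _ fun s _ => continuous_const.mul (contE s)
  have int1 : ∀ (s t : ℤ × ℤ),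
      IntegrableOn (fun x => (b s * (starRingEnd ℂ) (b t)) * E (s + -t) x) Q :=
    fun s t => intQ (continuous_const.mul (contE _))
  -- Step B : complex integral
  have stepB : (∫ x in Q, v x * (starRingEnd ℂ) (v x)) = ∑ s ∈ T, b s * (starRingEnd ℂ) (b s) := by
    have expand : ∀ x, v x * (starRingEnd ℂ) (v x)
        = ∑ s ∈ T, ∑ t ∈ T, (b s * (starRingEnd ℂ) (b t)) * E (s + -t) x := by
      intro x
      rw [hv]
      simp only [map_sum, map_mul]
      rw [Finset.sum_mul_sum]
      refine Finset.sum_congr rfl fun s _ => Finset.sum_congr rfl fun t _ => ?_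
      rw [conjE, ← mulE]
      ring
    simp only [expand]
    rw [integral_finset_sum _ (fun s _ => integrable_finset_sum _ (fun t _ => int1 s t))]
    refine Finset.sum_congr rfl fun s hs => ?_
    rw [integral_finset_sum _ (fun t _ => int1 s t)]
    have e3 : ∀ t ∈ T, (∫ x in Q, (b s * (starRingEnd ℂ) (b t)) * E (s + -t) x)
        = if s = t then b s * (starRingEnd ℂ) (b t) else 0 := by
      intro t _
      rw [integral_const_mul, orthE]
      by_cases h : s = t
      · simp [h]
      · rw [if_neg (fun hc => h (by rwa [add_neg_eq_zero] at hc)), if_neg h, mul_zero]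
    rw [Finset.sum_congr rfl e3, Finset.sum_ite_eq T s (fun t => b s * (starRingEnd ℂ) (b t)),
      if_pos hs]
  -- Step C : the L⁴ norm as real part
  have stepC : (∫ x in Q, ‖u x‖ ^ 4) = ∑ s ∈ T, ‖b s‖ ^ 2 := by
    have hpt : ∀ x, ‖u x‖ ^ 4 = (v x * (starRingEnd ℂ) (v x)).re := by
      intro x
      rw [← stepA x, Complex.mul_conj, Complex.ofReal_re, Complex.normSq_mul,
        Complex.normSq_eq_norm_sq]
      ring
    simp only [hpt]
    have hInt : IntegrableOn (fun x => v x * (starRingEnd ℂ) (v x)) Q :=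
      intQ (contv.mul (Complex.continuous_conj.comp contv))
    have hre := integral_re (f := fun x => v x * (starRingEnd ℂ) (v x))
      (μ := volume.restrict Q) hInt
    simp only [RCLike.re_to_complex] at hre
    rw [hre, stepB, Complex.re_sum]
    refine Finset.sum_congr rfl fun s _ => ?_
    rw [Complex.mul_conj, Complex.ofReal_re, Complex.normSq_eq_norm_sq]
  -- Step D : combinatorial bound
  rw [stepC]
  set Sig0 : ℝ := ∑ m ∈ S, ‖a m‖ ^ 2 with hSig
  have hSig0 : 0 ≤ Sig0 := Finset.sum_nonneg fun m _ => sq_nonneg _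
  have key1 : ∑ p ∈ Finset.filter (fun p => p.1 + p.2 = (0 : ℤ × ℤ)) P, ‖a p.1‖ ^ 2 ≤ Sig0 := by
    have hinj : ∀ x ∈ Finset.filter (fun p => p.1 + p.2 = (0 : ℤ × ℤ)) P,
        ∀ y ∈ Finset.filter (fun p => p.1 + p.2 = (0 : ℤ × ℤ)) P, x.1 = y.1 → x = y := by
      intro x hx y hy h
      rw [Finset.mem_filter] at hx hy
      have hx2 : x.2 = -x.1 := eq_neg_of_add_eq_zero_right hx.2
      have hy2 : y.2 = -y.1 := eq_neg_of_add_eq_zero_right hy.2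
      exact Prod.ext h (by rw [hx2, hy2, h])
    have e := Finset.sum_image (g := Prod.fst) (f := fun m => ‖a m‖ ^ 2) hinj
    rw [← e]
    refine Finset.sum_le_sum_of_subset_of_nonneg ?_ (fun m _ _ => sq_nonneg _)
    intro m hm
    obtain ⟨p, hp, rfl⟩ := Finset.mem_image.mp hm
    rw [Finset.mem_filter, hP, Finset.mem_product] at hp
    exact hp.1.1
  have key2 : ∑ p ∈ Finset.filter (fun p => p.1 + p.2 = (0 : ℤ × ℤ)) P, ‖a p.2‖ ^ 2 ≤ Sig0 := by
    have hinj : ∀ x ∈ Finset.filter (fun p => p.1 + p.2 = (0 : ℤ × ℤ)) P,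
        ∀ y ∈ Finset.filter (fun p => p.1 + p.2 = (0 : ℤ × ℤ)) P, x.2 = y.2 → x = y := by
      intro x hx y hy h
      rw [Finset.mem_filter] at hx hy
      have hx2 : x.1 = -x.2 := eq_neg_of_add_eq_zero_left hx.2
      have hy2 : y.1 = -y.2 := eq_neg_of_add_eq_zero_left hy.2
      exact Prod.ext (by rw [hx2, hy2, h]) h
    have e := Finset.sum_image (g := Prod.snd) (f := fun m => ‖a m‖ ^ 2) hinj
    rw [← e]
    refine Finset.sum_le_sum_of_subset_of_nonneg ?_ (fun m _ _ => sq_nonneg _)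
    intro m hm
    obtain ⟨p, hp, rfl⟩ := Finset.mem_image.mp hm
    rw [Finset.mem_filter, hP, Finset.mem_product] at hp
    exact hp.1.2
  have hb0 : ‖b (0 : ℤ × ℤ)‖ ^ 2 ≤ Sig0 ^ 2 := by
    have h1 : ‖b (0 : ℤ × ℤ)‖ ≤ Sig0 := by
      calc ‖b (0 : ℤ × ℤ)‖
          ≤ ∑ p ∈ Finset.filter (fun p => p.1 + p.2 = (0 : ℤ × ℤ)) P, ‖g p‖ := by
            simp only [hb]; exact norm_sum_le _ _
        _ ≤ ∑ p ∈ Finset.filter (fun p => p.1 + p.2 = (0 : ℤ × ℤ)) P,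
              (‖a p.1‖ ^ 2 + ‖a p.2‖ ^ 2) / 2 := by
            refine Finset.sum_le_sum fun p _ => ?_
            simp only [hg, norm_mul]
            nlinarith [sq_nonneg (‖a p.1‖ - ‖a p.2‖), norm_nonneg (a p.1), norm_nonneg (a p.2)]
        _ = ((∑ p ∈ Finset.filter (fun p => p.1 + p.2 = (0 : ℤ × ℤ)) P, ‖a p.1‖ ^ 2)
              + (∑ p ∈ Finset.filter (fun p => p.1 + p.2 = (0 : ℤ × ℤ)) P, ‖a p.2‖ ^ 2)) / 2 := by
            rw [← Finset.sum_add_distrib, ← Finset.sum_div]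
        _ ≤ (Sig0 + Sig0) / 2 := by linarith
        _ = Sig0 := by ring
    have h2 := pow_le_pow_left₀ (norm_nonneg _) h1 2
    simpa using h2
  have hbs : ∀ s ∈ T.erase 0, ‖b s‖ ^ 2
      ≤ 2 * ∑ p ∈ Finset.filter (fun p => p.1 + p.2 = s) P, ‖a p.1‖ ^ 2 * ‖a p.2‖ ^ 2 := by
    intro s hs
    have hs0 : s ≠ 0 := Finset.ne_of_mem_erase hs
    have h1 : ‖b s‖ ≤ ∑ p ∈ Finset.filter (fun p => p.1 + p.2 = s) P, ‖g p‖ := by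
      simp only [hb]; exact norm_sum_le _ _
    have h2 : ‖b s‖ ^ 2 ≤ (∑ p ∈ Finset.filter (fun p => p.1 + p.2 = s) P, ‖g p‖) ^ 2 := by
      have := pow_le_pow_left₀ (norm_nonneg _) h1 2
      simpa using this
    have h3 : (∑ p ∈ Finset.filter (fun p => p.1 + p.2 = s) P, ‖g p‖) ^ 2
        ≤ ((Finset.filter (fun p => p.1 + p.2 = s) P).card : ℝ)
          * ∑ p ∈ Finset.filter (fun p => p.1 + p.2 = s) P, ‖g p‖ ^ 2 := by
      exact sq_sum_le_card_mul_sum_sq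
    have h4 : ((Finset.filter (fun p => p.1 + p.2 = s) P).card : ℝ) ≤ 2 := by
      exact_mod_cast hcard s hs0
    have h5 : ∑ p ∈ Finset.filter (fun p => p.1 + p.2 = s) P, ‖g p‖ ^ 2
        = ∑ p ∈ Finset.filter (fun p => p.1 + p.2 = s) P, ‖a p.1‖ ^ 2 * ‖a p.2‖ ^ 2 :=
      Finset.sum_congr rfl fun p _ => by simp only [hg, norm_mul]; ring
    have h6 : (0:ℝ) ≤ ∑ p ∈ Finset.filter (fun p => p.1 + p.2 = s) P, ‖g p‖ ^ 2 :=
      Finset.sum_nonneg fun p _ => sq_nonneg _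
    calc ‖b s‖ ^ 2
        ≤ ((Finset.filter (fun p => p.1 + p.2 = s) P).card : ℝ)
          * ∑ p ∈ Finset.filter (fun p => p.1 + p.2 = s) P, ‖g p‖ ^ 2 := le_trans h2 h3
      _ ≤ 2 * ∑ p ∈ Finset.filter (fun p => p.1 + p.2 = s) P, ‖g p‖ ^ 2 :=
          mul_le_mul_of_nonneg_right h4 h6
      _ = 2 * ∑ p ∈ Finset.filter (fun p => p.1 + p.2 = s) P, ‖a p.1‖ ^ 2 * ‖a p.2‖ ^ 2 := by
          rw [h5]
  have split : ∑ s ∈ T, ‖b s‖ ^ 2 ≤ ‖b (0 : ℤ × ℤ)‖ ^ 2 + ∑ s ∈ T.erase 0, ‖b s‖ ^ 2 := by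
    by_cases h0 : (0 : ℤ × ℤ) ∈ T
    · rw [← Finset.add_sum_erase T (fun s => ‖b s‖ ^ 2) h0]
    · rw [Finset.erase_eq_of_notMem h0]
      exact le_add_of_nonneg_left (sq_nonneg _)
  have tail : ∑ s ∈ T.erase 0, ‖b s‖ ^ 2 ≤ 2 * Sig0 ^ 2 := by
    calc ∑ s ∈ T.erase 0, ‖b s‖ ^ 2
        ≤ ∑ s ∈ T.erase 0,
            2 * ∑ p ∈ Finset.filter (fun p => p.1 + p.2 = s) P, ‖a p.1‖ ^ 2 * ‖a p.2‖ ^ 2 :=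
          Finset.sum_le_sum hbs
      _ ≤ ∑ s ∈ T,
            2 * ∑ p ∈ Finset.filter (fun p => p.1 + p.2 = s) P, ‖a p.1‖ ^ 2 * ‖a p.2‖ ^ 2 := by
          refine Finset.sum_le_sum_of_subset_of_nonneg (Finset.erase_subset _ _)
            (fun s _ _ => ?_)
          have : (0:ℝ) ≤ ∑ p ∈ Finset.filter (fun p => p.1 + p.2 = s) P,
              ‖a p.1‖ ^ 2 * ‖a p.2‖ ^ 2 :=
            Finset.sum_nonneg fun p _ => mul_nonneg (sq_nonneg _) (sq_nonneg _)
          linarith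
      _ = 2 * ∑ s ∈ T, ∑ p ∈ Finset.filter (fun p => p.1 + p.2 = s) P,
            ‖a p.1‖ ^ 2 * ‖a p.2‖ ^ 2 := by rw [Finset.mul_sum]
      _ = 2 * ∑ p ∈ P, ‖a p.1‖ ^ 2 * ‖a p.2‖ ^ 2 := by
          rw [Finset.sum_fiberwise_of_maps_to maps_to]
      _ = 2 * Sig0 ^ 2 := by
          rw [hP, Finset.sum_product, hSig, sq, Finset.sum_mul_sum]
  linarith

end LpCircleAux
/-- `Lᵖ` bound, `p ∈ [4,∞)`, for trigonometric polynomials on the square torus whose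
frequencies lie on the circle `S_λ = {m ∈ ℤ² : |m|² = λ}`:
`∫_{[0,1]²} |u|ᵖ ≤ 3 |S_λ|^{(p-4)/2} (Σ |a_m|²)^{p/2}`. -/
theorem lp_bound_circle_trigonometric_polynomial
    (lam : ℝ) (hlam : 0 < lam) (p : ℝ) (hp : 4 ≤ p) (S : Finset (ℤ × ℤ))
    (hS : ∀ m : ℤ × ℤ, m ∈ S ↔ ((m.1 : ℝ) ^ 2 + (m.2 : ℝ) ^ 2 = lam))
    (a : ℤ × ℤ → ℂ) :
    (∫ x in Set.Icc (0 : ℝ) 1 ×ˢ Set.Icc (0 : ℝ) 1,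
        ‖∑ m ∈ S, a m *
          Complex.exp (2 * (Real.pi : ℂ) * Complex.I *
            ((m.1 : ℂ) * (x.1 : ℂ) + (m.2 : ℂ) * (x.2 : ℂ)))‖ ^ p) ≤
      3 * (S.card : ℝ) ^ ((p - 4) / 2) * (∑ m ∈ S, ‖a m‖ ^ 2) ^ (p / 2) := by
  classical
  show (∫ x in LpCircleAux.Q, ‖∑ m ∈ S, a m * LpCircleAux.E m x‖ ^ p) ≤ _
  set u : ℝ × ℝ → ℂ := fun x => ∑ m ∈ S, a m * LpCircleAux.E m x with hu
  set Sig0 : ℝ := ∑ m ∈ S, ‖a m‖ ^ 2 with hSig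
  have hSig0 : 0 ≤ Sig0 := Finset.sum_nonneg fun m _ => sq_nonneg _
  set K : ℝ := (S.card : ℝ) with hK
  have hK0 : 0 ≤ K := Nat.cast_nonneg _
  set C : ℝ := Real.sqrt (K * Sig0) with hC
  have hC0 : 0 ≤ C := Real.sqrt_nonneg _
  have hCS : ∀ x, ‖u x‖ ≤ C := by
    intro x
    have h1 : ‖u x‖ ≤ ∑ m ∈ S, ‖a m‖ := by
      calc ‖u x‖ ≤ ∑ m ∈ S, ‖a m * LpCircleAux.E m x‖ := norm_sum_le _ _
        _ = ∑ m ∈ S, ‖a m‖ := Finset.sum_congr rfl fun m _ => by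
            rw [norm_mul, LpCircleAux.normE, mul_one]
    have h2 : (∑ m ∈ S, ‖a m‖) ^ 2 ≤ K * Sig0 := sq_sum_le_card_mul_sum_sq
    have h3 : ∑ m ∈ S, ‖a m‖ ≤ C := by
      rw [hC]
      exact (Real.le_sqrt (Finset.sum_nonneg fun m _ => norm_nonneg _)
        (mul_nonneg hK0 hSig0)).mpr h2
    linarith
  have contu : Continuous u := by
    rw [hu]
    exact continuous_finset_sum _ fun m _ => continuous_const.mul (LpCircleAux.contE m)
  have int4 : IntegrableOn (fun x => ‖u x‖ ^ (4 : ℕ)) LpCircleAux.Q :=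
    ((contu.norm.pow 4).continuousOn).integrableOn_compact LpCircleAux.compQ
  have intp : IntegrableOn (fun x => ‖u x‖ ^ p) LpCircleAux.Q := by
    refine (ContinuousOn.rpow_const contu.norm.continuousOn
      (fun x _ => Or.inr (by linarith : (0:ℝ) ≤ p))).integrableOn_compact LpCircleAux.compQ
  have hpt : ∀ x, ‖u x‖ ^ p ≤ ‖u x‖ ^ (4 : ℕ) * C ^ (p - 4) := by
    intro x
    have hb : (0:ℝ) ≤ ‖u x‖ := norm_nonneg _
    have e1 : ‖u x‖ ^ p = ‖u x‖ ^ ((4:ℝ) + (p - 4)) := by congr 1; ring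
    rw [e1, Real.rpow_add_of_nonneg hb (by norm_num) (by linarith)]
    have e2 : ‖u x‖ ^ ((4:ℝ)) = ‖u x‖ ^ (4 : ℕ) := by
      rw [show ((4:ℝ)) = ((4:ℕ):ℝ) by norm_num, Real.rpow_natCast]
    rw [e2]
    exact mul_le_mul_of_nonneg_left
      (Real.rpow_le_rpow hb (hCS x) (by linarith)) (pow_nonneg hb 4)
  have hcard' : ∀ s : ℤ × ℤ, s ≠ 0 →
      ((S ×ˢ S).filter (fun p => p.1 + p.2 = s)).card ≤ 2 :=
    fun s hs => LpCircleAux.card_fiber hS hs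
  have hl4 : (∫ x in LpCircleAux.Q, ‖u x‖ ^ (4:ℕ)) ≤ 3 * Sig0 ^ 2 :=
    LpCircleAux.l4 S a hcard'
  have main : (∫ x in LpCircleAux.Q, ‖u x‖ ^ p) ≤ (3 * Sig0 ^ 2) * C ^ (p - 4) := by
    calc (∫ x in LpCircleAux.Q, ‖u x‖ ^ p)
        ≤ ∫ x in LpCircleAux.Q, ‖u x‖ ^ (4:ℕ) * C ^ (p - 4) :=
          setIntegral_mono_on intp (int4.mul_const _) LpCircleAux.measQ fun x _ => hpt x
      _ = (∫ x in LpCircleAux.Q, ‖u x‖ ^ (4:ℕ)) * C ^ (p - 4) :=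
          integral_mul_const _ _
      _ ≤ (3 * Sig0 ^ 2) * C ^ (p - 4) :=
          mul_le_mul_of_nonneg_right hl4 (Real.rpow_nonneg hC0 _)
  have transform : (3 * Sig0 ^ 2) * C ^ (p - 4)
      = 3 * K ^ ((p - 4) / 2) * Sig0 ^ (p / 2) := by
    have e1 : C ^ (p - 4) = K ^ ((p - 4) / 2) * Sig0 ^ ((p - 4) / 2) := by
      rw [hC, Real.sqrt_eq_rpow, ← Real.rpow_mul (mul_nonneg hK0 hSig0),
        show (1/2) * (p - 4) = (p - 4) / 2 by ring, Real.mul_rpow hK0 hSig0]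
    have e2 : Sig0 ^ (2:ℕ) * Sig0 ^ ((p - 4) / 2) = Sig0 ^ (p / 2) := by
      rw [← Real.rpow_natCast Sig0 2,
        ← Real.rpow_add_of_nonneg hSig0 (by norm_num) (by linarith)]
      congr 1
      push_cast
      ring
    calc (3 * Sig0 ^ 2) * C ^ (p - 4)
        = 3 * K ^ ((p - 4) / 2) * (Sig0 ^ (2:ℕ) * Sig0 ^ ((p - 4) / 2)) := by rw [e1]; ring
      _ = 3 * K ^ ((p - 4) / 2) * Sig0 ^ (p / 2) := by rw [e2]
  calc (∫ x in LpCircleAux.Q, ‖u x‖ ^ p) ≤ (3 * Sig0 ^ 2) * C ^ (p - 4) := main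
    _ = 3 * K ^ ((p - 4) / 2) * Sig0 ^ (p / 2) := transform

end
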